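/- For all positive integers x and y, tan(x/y) is irrational. -/

import Mathlib

noncomputable section

open intervalIntegral MeasureTheory.MeasureSpace Set Polynomial Real
open scoped Nat

private def I (n : ℕ) (θ : ℝ) : ℝ := ∫ x in (-1)..1, (1 - x ^ 2) ^ n * cos (x * θ)

variable {n : ℕ} {θ : ℝ}

private lemma I_zero : I 0 θ * θ = 2 * sin θ := by
  rw [mul_comm, I]
  simp [mul_integral_comp_mul_right, two_mul]

private lemma recursion' (n : ℕ) :
    I (n + 1) θ * θ ^ 2 = - (2 * 2 * ((n + 1) * (0 ^ n * cos θ))) +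
      2 * (n + 1) * (2 * n + 1) * I n θ - 4 * (n + 1) * n * I (n - 1) θ := by
  rw [I]
  let f (x : ℝ) : ℝ := 1 - x ^ 2
  let u₁ (x : ℝ) : ℝ := f x ^ (n + 1)
  let u₁' (x : ℝ) : ℝ := - (2 * (n + 1) * x * f x ^ n)
  let v₁ (x : ℝ) : ℝ := sin (x * θ)
  let v₁' (x : ℝ) : ℝ := cos (x * θ) * θ
  let u₂ (x : ℝ) : ℝ := x * (f x) ^ n
  let u₂' (x : ℝ) : ℝ := (f x) ^ n - 2 * n * x ^ 2 * (f x) ^ (n - 1)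
  let v₂ (x : ℝ) : ℝ := cos (x * θ)
  let v₂' (x : ℝ) : ℝ := -sin (x * θ) * θ
  have hfd : Continuous f := by fun_prop
  have hu₁d : Continuous u₁' := by fun_prop
  have hv₁d : Continuous v₁' := by fun_prop
  have hu₂d : Continuous u₂' := by fun_prop
  have hv₂d : Continuous v₂' := by fun_prop
  have hu₁_eval_one : u₁ 1 = 0 := by simp only [u₁, f]; simp
  have hu₁_eval_neg_one : u₁ (-1) = 0 := by simp only [u₁, f]; simp
  have t : u₂ 1 * v₂ 1 - u₂ (-1) * v₂ (-1) = 2 * (0 ^ n * cos θ) := by simp [u₂, v₂, f, ← two_mul]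
  have hf (x) : HasDerivAt f (- 2 * x) x := by
    convert (hasDerivAt_pow 2 x).const_sub 1 using 1
    · rfl
    · rfl
    simp
  have hu₁ (x) : HasDerivAt u₁ (u₁' x) x := by
    convert (hf x).fun_pow _ using 1
    · rfl
    · rfl
    simp only [Nat.add_succ_sub_one, u₁', Nat.cast_add_one]
    ring
  have hv₁ (x) : HasDerivAt v₁ (v₁' x) x := (hasDerivAt_mul_const θ).sin
  have hu₂ (x) : HasDerivAt u₂ (u₂' x) x := by
    convert (hasDerivAt_id' x).fun_mul ((hf x).fun_pow _) using 1
    · rfl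
    · rfl
    simp only [u₂']
    ring
  have hv₂ (x) : HasDerivAt v₂ (v₂' x) x := (hasDerivAt_mul_const θ).cos
  convert_to (∫ (x : ℝ) in (-1)..1, u₁ x * v₁' x) * θ = _ using 1
  · simp_rw [u₁, f, v₁', ← intervalIntegral.integral_mul_const, sq θ, mul_assoc]
  rw [integral_mul_deriv_eq_deriv_mul (fun x _ => hu₁ x) (fun x _ => hv₁ x)
    (hu₁d.intervalIntegrable _ _) (hv₁d.intervalIntegrable _ _), hu₁_eval_one, hu₁_eval_neg_one,
    zero_mul, zero_mul, sub_zero, zero_sub, ← integral_neg, ← integral_mul_const]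
  convert_to ((-2 : ℝ) * (n + 1)) * ∫ (x : ℝ) in (-1)..1, (u₂ x * v₂' x) = _ using 1
  · rw [← integral_const_mul]
    congr 1 with x
    dsimp [u₁', v₁, u₂, v₂']
    ring
  rw [integral_mul_deriv_eq_deriv_mul (fun x _ => hu₂ x) (fun x _ => hv₂ x)
    (hu₂d.intervalIntegrable _ _) (hv₂d.intervalIntegrable _ _),
    mul_sub, t, neg_mul, neg_mul, neg_mul, sub_neg_eq_add]
  have (x : ℝ) : u₂' x = (2 * n + 1) * f x ^ n - 2 * n * f x ^ (n - 1) := by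
    cases n with
    | zero => simp [u₂']
    | succ n => ring!
  simp_rw [this, sub_mul, mul_assoc _ _ (v₂ _)]
  have : Continuous v₂ := by fun_prop
  rw [mul_mul_mul_comm, integral_sub, mul_sub, add_sub_assoc]
  · congr 1
    simp_rw [integral_const_mul]
    ring!
  all_goals exact Continuous.intervalIntegrable (by fun_prop) _ _

private lemma recursion (n : ℕ) :
    I (n + 2) θ * θ ^ 2 =
      2 * (n + 2) * (2 * n + 3) * I (n + 1) θ - 4 * (n + 2) * (n + 1) * I n θ := by
  rw [recursion' (n + 1)]
  simp
  ring!

private lemma I_one : I 1 θ * θ ^ 3 = 4 * sin θ - 4 * θ * cos θ := by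
  rw [_root_.pow_succ, ← mul_assoc, recursion' 0, sub_mul, add_mul, mul_assoc _ (I 0 θ), I_zero]
  ring

private def sinPoly : ℕ → ℤ[X]
  | 0 => C 2
  | 1 => C 4
  | (n+2) => ((2 : ℤ) * (2 * n + 3)) • sinPoly (n + 1) + monomial 2 (-4) * sinPoly n

private def cosPoly : ℕ → ℤ[X]
  | 0 => 0
  | 1 => monomial 1 (-4)
  | (n+2) => ((2 : ℤ) * (2 * n + 3)) • cosPoly (n + 1) + monomial 2 (-4) * cosPoly n

private lemma sinPoly_natDegree_le : ∀ n : ℕ, (sinPoly n).natDegree ≤ n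
  | 0 => by simp [sinPoly]
  | 1 => by simp only [natDegree_C, mul_one, zero_le', sinPoly]
  | n + 2 => by
      rw [sinPoly]
      refine natDegree_add_le_of_degree_le ((natDegree_smul_le _ _).trans ?_) ?_
      · exact (sinPoly_natDegree_le (n + 1)).trans (by simp)
      refine natDegree_mul_le.trans ?_
      simpa [add_comm 2] using sinPoly_natDegree_le n

private lemma cosPoly_natDegree_le : ∀ n : ℕ, (cosPoly n).natDegree ≤ n
  | 0 => by simp [cosPoly]
  | 1 => (natDegree_monomial_le _).trans (by simp)
  | n + 2 => by
      rw [cosPoly]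
      refine natDegree_add_le_of_degree_le ((natDegree_smul_le _ _).trans ?_) ?_
      · exact (cosPoly_natDegree_le (n + 1)).trans (by simp)
      exact natDegree_mul_le.trans (by simp [add_comm 2, cosPoly_natDegree_le n])

private lemma sinPoly_add_cosPoly_eval (θ : ℝ) :
    ∀ n : ℕ,
      I n θ * θ ^ (2 * n + 1) = n ! * ((sinPoly n).eval₂ (Int.castRingHom _) θ * sin θ +
        (cosPoly n).eval₂ (Int.castRingHom _) θ * cos θ)
  | 0 => by simp [sinPoly, cosPoly, I_zero]
  | 1 => by simp [I_one, sinPoly, cosPoly, sub_eq_add_neg]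
  | n + 2 => by
      calc I (n + 2) θ * θ ^ (2 * (n + 2) + 1) = I (n + 2) θ * θ ^ 2 * θ ^ (2 * n + 3) := by ring
        _ = 2 * (n + 2) * (2 * n + 3) * (I (n + 1) θ * θ ^ (2 * (n + 1) + 1)) -
            4 * (n + 2) * (n + 1) * θ ^ 2 * (I n θ * θ ^ (2 * n + 1)) := by rw [recursion]; ring
        _ = _ := by simp [sinPoly_add_cosPoly_eval, sinPoly, cosPoly, Nat.factorial_succ]; ring

private lemma is_integer {p : ℤ[X]} (a b : ℤ) {k : ℕ} (hp : p.natDegree ≤ k) :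
    ∃ z : ℤ, p.eval₂ (Int.castRingHom ℝ) (a / b) * b ^ k = z := by
  rcases eq_or_ne b 0 with rfl | hb
  · rcases k.eq_zero_or_pos with rfl | hk
    · exact ⟨p.coeff 0, by simp⟩
    exact ⟨0, by simp [hk.ne']⟩
  refine ⟨∑ i ∈ p.support, p.coeff i * a ^ i * b ^ (k - i), ?_⟩
  conv => lhs; rw [← sum_monomial_eq p]
  rw [eval₂_sum, sum, Finset.sum_mul, Int.cast_sum]
  simp only [eval₂_monomial, eq_intCast, div_pow, Int.cast_mul, Int.cast_pow]
  refine Finset.sum_congr rfl (fun i hi => ?_)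
  have ik := (le_natDegree_of_mem_supp i hi).trans hp
  rw [mul_assoc, div_mul_comm, ← Int.cast_pow, ← Int.cast_pow, ← Int.cast_pow,
    ← pow_sub_mul_pow b ik, ← Int.cast_div_charZero, Int.mul_ediv_cancel _ (pow_ne_zero _ hb),
    ← mul_assoc, mul_right_comm, ← Int.cast_pow]
  exact dvd_mul_left _ _

open Filter

/-- General bound: `|I n θ| ≤ 2` for any `θ`. -/
private lemma abs_I_le (n : ℕ) (θ : ℝ) : |I n θ| ≤ 2 := by
  rw [← Real.norm_eq_abs]
  refine (norm_integral_le_of_norm_le_const ?_).trans (show (1 : ℝ) * _ ≤ _ by norm_num)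
  intros x hx
  simp only [uIoc_of_le, neg_le_self_iff, zero_le_one, mem_Ioc] at hx
  rw [Real.norm_eq_abs, abs_mul, abs_pow]
  refine mul_le_one₀ (pow_le_one₀ (abs_nonneg _) ?_) (abs_nonneg _) (abs_cos_le_one _)
  rw [abs_le]
  constructor <;> nlinarith [hx.1, hx.2]

private lemma tendsto_pow_div_factorial_at_top_aux (a : ℝ) :
    Tendsto (fun n => (a : ℝ) ^ (2 * n + 1) / n !) atTop (nhds 0) := by
  rw [← mul_zero a]
  refine ((FloorSemiring.tendsto_pow_div_factorial_atTop (a ^ 2)).const_mul a).congr (fun x => ?_)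
  rw [← pow_mul, mul_div_assoc', _root_.pow_succ']

private lemma not_irrational_exists_rep {x : ℝ} :
    ¬Irrational x → ∃ (a : ℤ) (b : ℕ), 0 < b ∧ x = a / b := by
  rw [Irrational, not_not, mem_range]
  rintro ⟨q, rfl⟩
  exact ⟨q.num, q.den, q.pos, by exact_mod_cast (Rat.num_div_den _).symm⟩

/-- If all `I m θ = 0` for `m ≥ N`, then `sin θ = 0` (given `θ ≠ 0`). -/
private lemma sin_eq_zero_of_I_eventually_zero {θ : ℝ} (hθ : θ ≠ 0) {N : ℕ}
    (h : ∀ m, N ≤ m → I m θ = 0) : sin θ = 0 := by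
  have Q : ∀ m : ℕ, I (N - m) θ = 0 ∧ I (N - m + 1) θ = 0 := by
    intro m
    induction m with
    | zero => exact ⟨h N (by omega), h (N + 1) (by omega)⟩
    | succ m ih =>
      rcases le_or_gt N m with hm | hm
      · have h2 : N - (m + 1) = N - m := by omega
        rw [h2]; exact ih
      · have h1 : N - m = N - (m + 1) + 1 := by omega
        refine ⟨?_, by rw [← h1]; exact ih.1⟩
        set n := N - (m + 1) with hn
        have hr := recursion (θ := θ) n
        have e1 : I (n + 1) θ = 0 := by rw [← h1]; exact ih.1
        have e2 : I (n + 2) θ = 0 := by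
          have : n + 2 = N - m + 1 := by omega
          rw [this]; exact ih.2
        rw [e1, e2] at hr
        have h4 : (4 * ((n : ℝ) + 2) * ((n : ℝ) + 1)) * I n θ = 0 := by linarith
        rcases mul_eq_zero.1 h4 with h5 | h5
        · exfalso; revert h5; positivity
        · exact h5
  have h0 : I 0 θ = 0 := by simpa using (Q N).1
  have := I_zero (θ := θ)
  rw [h0, zero_mul] at this
  linarith

/-- From positive rationality data, contradict irrationality of `π`. -/
private lemma pi_ne_rat_aux (a : ℤ) (b : ℤ) (hb : (b : ℝ) ≠ 0) (h : (b : ℝ) * π = a) : False := by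
  have : π = ((a / b : ℚ) : ℝ) := by
    push_cast
    field_simp
    linarith [h]
  exact irrational_pi ⟨(a / b : ℚ), this.symm⟩

theorem tan_rat_irrational (x y : ℕ) (hx : 0 < x) (hy : 0 < y) :
    Irrational (Real.tan ((x : ℝ) / (y : ℝ))) := by
  set θ : ℝ := (x : ℝ) / (y : ℝ) with hθdef
  have hy0 : (y : ℝ) ≠ 0 := by positivity
  have hθpos : 0 < θ := by positivity
  have hθ : θ ≠ 0 := hθpos.ne'
  -- sin θ ≠ 0
  have hsin : sin θ ≠ 0 := by
    intro hs
    obtain ⟨k, hk⟩ := Real.sin_eq_zero_iff.1 hs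
    have hk0 : (k : ℝ) ≠ 0 := by
      intro h0
      rw [h0, zero_mul] at hk
      exact hθ hk.symm
    exact pi_ne_rat_aux (x : ℤ) (k * y) (by push_cast; exact mul_ne_zero hk0 hy0)
      (by push_cast; rw [mul_assoc, mul_comm (y : ℝ) π, ← mul_assoc, hk]
          field_simp [hθdef]
          rw [hθdef, div_mul_cancel₀ _ hy0])
  -- cos θ ≠ 0
  have hcos : cos θ ≠ 0 := by
    intro hc
    obtain ⟨k, hk⟩ := Real.cos_eq_zero_iff.1 hc
    refine pi_ne_rat_aux (2 * x : ℤ) ((2 * k + 1) * y) ?_ ?_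
    · push_cast
      refine mul_ne_zero ?_ hy0
      have : ((2 * k + 1 : ℤ) : ℝ) ≠ 0 := Int.cast_ne_zero.2 (by omega)
      push_cast at this
      exact this
    · push_cast
      have : (2 * (k : ℝ) + 1) * π = 2 * θ := by rw [hk]; ring
      calc (2 * (k : ℝ) + 1) * (y : ℝ) * π = (y : ℝ) * ((2 * (k : ℝ) + 1) * π) := by ring
        _ = (y : ℝ) * (2 * θ) := by rw [this]
        _ = 2 * (x : ℝ) := by rw [hθdef]; field_simp
  -- main argument
  intro hrat
  obtain ⟨p, q, hq, htan⟩ := not_irrational_exists_rep (not_not_intro hrat)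
  have hq0 : (q : ℝ) ≠ 0 := by positivity
  have hsc : (q : ℝ) * sin θ = (p : ℝ) * cos θ := by
    have : sin θ = Real.tan θ * cos θ := by rw [Real.tan_eq_sin_div_cos]; field_simp
    rw [this, htan]; field_simp
  -- for each n, the integer z n
  have key : ∀ n : ℕ, ∃ z : ℤ, (q : ℝ) * (I n θ * (x : ℝ) ^ (2 * n + 1)) = n ! * z * cos θ := by
    intro n
    obtain ⟨z₁, hz₁⟩ := is_integer (p := sinPoly n) (k := 2 * n + 1) (x : ℤ) (y : ℤ)
      ((sinPoly_natDegree_le n).trans (by omega))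
    obtain ⟨z₂, hz₂⟩ := is_integer (p := cosPoly n) (k := 2 * n + 1) (x : ℤ) (y : ℤ)
      ((cosPoly_natDegree_le n).trans (by omega))
    refine ⟨p * z₁ + q * z₂, ?_⟩
    have e := sinPoly_add_cosPoly_eval θ n
    have hxy : ((x : ℤ) : ℝ) / ((y : ℤ) : ℝ) = θ := by push_cast; rfl
    rw [hxy] at hz₁ hz₂
    push_cast at hz₁ hz₂
    have hpow : (x : ℝ) ^ (2 * n + 1) = θ ^ (2 * n + 1) * (y : ℝ) ^ (2 * n + 1) := by
      rw [hθdef, div_pow]; field_simp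
    calc (q : ℝ) * (I n θ * (x : ℝ) ^ (2 * n + 1))
        = (q : ℝ) * (I n θ * θ ^ (2 * n + 1)) * (y : ℝ) ^ (2 * n + 1) := by rw [hpow]; ring
      _ = (q : ℝ) * (n ! * ((sinPoly n).eval₂ (Int.castRingHom _) θ * sin θ +
            (cosPoly n).eval₂ (Int.castRingHom _) θ * cos θ)) * (y : ℝ) ^ (2 * n + 1) := by rw [e]
      _ = (n !) * (((sinPoly n).eval₂ (Int.castRingHom ℝ) θ * (y : ℝ) ^ (2 * n + 1)) *
            ((q : ℝ) * sin θ) + ((cosPoly n).eval₂ (Int.castRingHom ℝ) θ * (y : ℝ) ^ (2 * n + 1)) *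
            ((q : ℝ) * cos θ)) := by push_cast; ring
      _ = (n !) * (((z₁ : ℝ)) * ((p : ℝ) * cos θ) + ((z₂ : ℝ)) * ((q : ℝ) * cos θ)) := by
            rw [hz₁, hz₂, hsc]
      _ = n ! * ((p * z₁ + q * z₂ : ℤ) : ℝ) * cos θ := by push_cast; ring
  -- infinitely many n with I n θ ≠ 0
  have freq : ∃ᶠ n in atTop, I n θ ≠ 0 := by
    rw [Filter.frequently_atTop]
    intro N
    by_contra hcon
    push_neg at hcon
    exact hsin (sin_eq_zero_of_I_eventually_zero hθ (fun m hm => hcon m hm))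
  -- eventual smallness
  have habs : 0 < |cos θ| := abs_pos.2 hcos
  have ev : ∀ᶠ n : ℕ in atTop, (x : ℝ) ^ (2 * n + 1) / n ! < |cos θ| / (2 * q) := by
    exact (tendsto_pow_div_factorial_at_top_aux x).eventually_lt_const (by positivity)
  obtain ⟨n, hn, hIn⟩ := (ev.and_frequently freq).exists
  obtain ⟨z, hz⟩ := key n
  have hz0 : z ≠ 0 := by
    intro h0
    rw [h0] at hz
    simp only [Int.cast_zero, mul_zero, zero_mul] at hz
    have : I n θ * (x : ℝ) ^ (2 * n + 1) = 0 := by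
      rcases mul_eq_zero.1 hz with h | h
      · exact absurd h hq0
      · exact h
    rcases mul_eq_zero.1 this with h | h
    · exact hIn h
    · exact absurd h (by positivity)
  have hz1 : (1 : ℝ) ≤ |(z : ℝ)| := by
    rw [← Int.cast_abs]
    exact_mod_cast Int.one_le_abs hz0
  -- take abs of hz
  have habs_eq : (q : ℝ) * (|I n θ| * (x : ℝ) ^ (2 * n + 1)) = n ! * |(z : ℝ)| * |cos θ| := by
    have := congrArg abs hz
    rw [abs_mul, abs_mul, abs_mul, abs_mul] at this
    rw [abs_of_nonneg (by positivity : (0:ℝ) ≤ (q:ℝ)), abs_of_nonneg (by positivity : (0:ℝ) ≤ ((x:ℝ)) ^ (2*n+1)), abs_of_nonneg (by positivity : (0:ℝ) ≤ (n ! : ℝ))] at this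
    linarith [this]
  have hup : (q : ℝ) * (|I n θ| * (x : ℝ) ^ (2 * n + 1)) ≤ q * (2 * (x : ℝ) ^ (2 * n + 1)) := by
    gcongr
    exact abs_I_le n θ
  have hlow : (n ! : ℝ) * |cos θ| ≤ n ! * |(z : ℝ)| * |cos θ| := by
    calc (n ! : ℝ) * |cos θ| = (n ! : ℝ) * 1 * |cos θ| := by ring
      _ ≤ (n ! : ℝ) * |(z : ℝ)| * |cos θ| := by
          have h0 : (0:ℝ) ≤ |cos θ| := abs_nonneg _
          have h1 : (0:ℝ) ≤ (n ! : ℝ) := by positivity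
          exact mul_le_mul_of_nonneg_right
            (by nlinarith [hz1] : (n ! : ℝ) * 1 ≤ (n ! : ℝ) * |(z : ℝ)|) h0
  have hfin : (n ! : ℝ) * |cos θ| ≤ q * (2 * (x : ℝ) ^ (2 * n + 1)) := by linarith
  rw [div_lt_div_iff₀ (by positivity) (by positivity)] at hn
  have : (0:ℝ) < (n ! : ℝ) := by positivity
  nlinarith [hn, hfin]
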